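/- Fix α > 0, ε > 0, and 0 < δ₁ < 1/(2 + 1/(α+ε)); set s = (α+ε)/(2(α+ε)+1) + δ₁. For a Lüroth word b = (b_1,…,b_n) let R_n(b) = Q_n(b)^{1/(α+ε)} and let K_n(b) be the closure of the union of the cylinders C_{n+1}(b, c) over integers c ≥ R_n(b). Then there exists N such that for all n ≥ N and all words b of length n with digits ≥ 2: Σ_{c ≥ R_n(b), c ∈ ℕ} |K_{n+1}(b c)|^s ≤ |K_n(b)|^s. -/

import Mathlib

/-- The Lüroth map L(x) = ⌊1/x⌋(⌊1/x⌋+1)x − ⌊1/x⌋, with L(0) = 0. -/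
noncomputable def lurothL (x : ℝ) : ℝ :=
  if x = 0 then 0 else (⌊1 / x⌋ : ℝ) * ((⌊1 / x⌋ : ℝ) + 1) * x - (⌊1 / x⌋ : ℝ)

/-- The n-th Lüroth digit (1-indexed): a_n(x) = ⌊1/L^{n−1}(x)⌋ + 1. -/
noncomputable def lurothDigit (n : ℕ) (x : ℝ) : ℕ :=
  (⌊1 / lurothL^[n - 1] x⌋).toNat + 1

/-- The cylinder of a word (b_1, …, b_n). -/
noncomputable def lurothCyl (b : ℕ → ℕ) (n : ℕ) : Set ℝ :=
  {x ∈ Set.Ioc (0 : ℝ) 1 | ∀ j ∈ Finset.Icc 1 n, lurothDigit j x = b j}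

/-- The continuant of a word: Q_n(b) = b_1(b_1−1)⋯b_{n−1}(b_{n−1}−1)b_n. -/
def lurothQ (b : ℕ → ℕ) (n : ℕ) : ℕ :=
  (∏ j ∈ Finset.Ico 1 n, b j * (b j - 1)) * b n

/-- R_n(b) = Q_n(b)^{1/(α+ε)}. -/
noncomputable def lurothR (αε : ℝ) (b : ℕ → ℕ) (n : ℕ) : ℝ :=
  (lurothQ b n : ℝ) ^ (1 / αε)

/-- K_n(b): the closure of the union of the cylinders C_{n+1}(b, c) over
integers c ≥ R_n(b). -/
noncomputable def lurothK (αε : ℝ) (b : ℕ → ℕ) (n : ℕ) : Set ℝ :=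
  closure (⋃ c : ℕ, ⋃ (_ : lurothR αε b n ≤ (c : ℝ)),
    lurothCyl (Function.update b (n + 1) c) (n + 1))

open Set Finset

lemma floor_eq_of_mem (c : ℕ) (hc : 2 ≤ c) (x : ℝ)
    (hx : x ∈ Set.Ioc (1/(c:ℝ)) (1/((c:ℝ)-1))) : ⌊1/x⌋ = (c:ℤ) - 1 := by
  have hc1 : (1:ℝ) ≤ (c:ℝ) - 1 := by
    have : (2:ℝ) ≤ c := by exact_mod_cast hc
    linarith
  have hcpos : (0:ℝ) < c := by linarith
  have hx0 : 0 < x := lt_trans (by positivity) hx.1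
  obtain ⟨h1, h2⟩ := hx
  rw [Int.floor_eq_iff]
  constructor
  · push_cast
    rw [le_div_iff₀ hx0]
    calc ((c:ℝ)-1) * x ≤ ((c:ℝ)-1) * (1/((c:ℝ)-1)) := by
          apply mul_le_mul_of_nonneg_left h2 (by linarith)
      _ = 1 := by field_simp
  · push_cast
    rw [div_lt_iff₀ hx0]
    have h3 : (c:ℝ) * (1/(c:ℝ)) = 1 := by field_simp
    nlinarith [mul_lt_mul_of_pos_left h1 hcpos]

lemma lurothL_apply (c : ℕ) (hc : 2 ≤ c) (x : ℝ)
    (hx : x ∈ Set.Ioc (1/(c:ℝ)) (1/((c:ℝ)-1))) :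
    lurothL x = (c:ℝ) * ((c:ℝ)-1) * x - ((c:ℝ)-1) := by
  have hx0 : 0 < x := lt_trans (by positivity) hx.1
  have hf := floor_eq_of_mem c hc x hx
  rw [lurothL, if_neg (ne_of_gt hx0), hf]
  push_cast
  ring

lemma lurothL_mem (c : ℕ) (hc : 2 ≤ c) (x : ℝ)
    (hx : x ∈ Set.Ioc (1/(c:ℝ)) (1/((c:ℝ)-1))) :
    lurothL x ∈ Set.Ioc (0:ℝ) 1 := by
  have hc1 : (1:ℝ) ≤ (c:ℝ) - 1 := by
    have : (2:ℝ) ≤ c := by exact_mod_cast hc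
    linarith
  have hcpos : (0:ℝ) < c := by linarith
  rw [lurothL_apply c hc x hx]
  obtain ⟨h1, h2⟩ := hx
  constructor
  · have : (c:ℝ) * ((c:ℝ)-1) * (1/(c:ℝ)) < (c:ℝ) * ((c:ℝ)-1) * x := by
      apply mul_lt_mul_of_pos_left h1 (by positivity)
    have heq : (c:ℝ) * ((c:ℝ)-1) * (1/(c:ℝ)) = (c:ℝ) - 1 := by field_simp
    linarith
  · have : (c:ℝ) * ((c:ℝ)-1) * x ≤ (c:ℝ) * ((c:ℝ)-1) * (1/((c:ℝ)-1)) := by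
      apply mul_le_mul_of_nonneg_left h2 (by positivity)
    have heq : (c:ℝ) * ((c:ℝ)-1) * (1/((c:ℝ)-1)) = (c:ℝ) := by field_simp
    linarith

lemma digit_one_eq_iff (c : ℕ) (hc : 2 ≤ c) (x : ℝ) (hx : x ∈ Set.Ioc (0:ℝ) 1) :
    lurothDigit 1 x = c ↔ x ∈ Set.Ioc (1/(c:ℝ)) (1/((c:ℝ)-1)) := by
  have hc1 : (1:ℝ) ≤ (c:ℝ) - 1 := by
    have : (2:ℝ) ≤ c := by exact_mod_cast hc
    linarith
  have hx0 : 0 < x := hx.1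
  have h1x : 1 ≤ 1/x := (one_le_div hx0).2 hx.2
  have hfl : 1 ≤ ⌊1/x⌋ := by
    exact_mod_cast Int.le_floor.2 (by exact_mod_cast h1x)
  constructor
  · intro h
    rw [lurothDigit] at h
    simp only [Nat.sub_self, Function.iterate_zero, id_eq] at h
    have h' : ⌊1/x⌋ = (c:ℤ) - 1 := by omega
    have hle : ((c:ℝ) - 1) ≤ 1/x := by
      have := Int.floor_le (1/x)
      rw [h'] at this; push_cast at this; linarith
    have hlt : 1/x < (c:ℝ) := by
      have := Int.lt_floor_add_one (1/x)
      rw [h'] at this; push_cast at this; linarith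
    have hcpos : (0:ℝ) < c := by linarith
    have h1' := (div_lt_iff₀ hx0).1 hlt
    have h2' := (le_div_iff₀ hx0).1 hle
    constructor
    · rw [div_lt_iff₀ hcpos]; nlinarith
    · rw [le_div_iff₀ (by linarith : (0:ℝ) < (c:ℝ)-1)]; nlinarith
  · intro h
    rw [lurothDigit]
    simp only [Nat.sub_self, Function.iterate_zero, id_eq]
    rw [floor_eq_of_mem c hc x h]
    omega

lemma digit_shift (j : ℕ) (hj : 1 ≤ j) (x : ℝ) :
    lurothDigit (j+1) x = lurothDigit j (lurothL x) := by
  rw [lurothDigit, lurothDigit]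
  have : (j + 1) - 1 = (j - 1) + 1 := by omega
  rw [this, Function.iterate_succ_apply]

noncomputable def lurothP (b : ℕ → ℕ) (n : ℕ) : ℝ :=
  ∏ j ∈ Finset.Icc 1 n, (1 / ((b j : ℝ) * ((b j : ℝ) - 1)))

lemma lurothP_pos (b : ℕ → ℕ) (n : ℕ) (hb : ∀ j ∈ Finset.Icc 1 n, 2 ≤ b j) :
    0 < lurothP b n := by
  apply Finset.prod_pos
  intro j hj
  have h2 : (2:ℝ) ≤ b j := by exact_mod_cast hb j hj
  have : (0:ℝ) < (b j:ℝ) * ((b j:ℝ) - 1) := by nlinarith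
  positivity

set_option maxHeartbeats 1000000 in
/-- Main structural lemma: cylinders are explicit intervals. -/
lemma cyl_eq_Ioc : ∀ (n : ℕ) (b : ℕ → ℕ), (∀ j ∈ Finset.Icc 1 n, 2 ≤ b j) →
    ∃ u : ℝ, 0 ≤ u ∧ u + lurothP b n ≤ 1 ∧ ∀ c : ℕ, 2 ≤ c →
      lurothCyl (Function.update b (n+1) c) (n+1)
        = Set.Ioc (u + lurothP b n / (c:ℝ)) (u + lurothP b n / ((c:ℝ)-1)) := by
  intro n
  induction n with
  | zero =>
    intro b _
    refine ⟨0, le_refl 0, by simp [lurothP], ?_⟩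
    intro c hc
    have hc1 : (1:ℝ) ≤ (c:ℝ) - 1 := by
      have : (2:ℝ) ≤ c := by exact_mod_cast hc
      linarith
    have hP : lurothP b 0 = 1 := by simp [lurothP]
    rw [hP]
    ext x
    simp only [lurothCyl, Set.mem_setOf_eq, Finset.mem_Icc, zero_add, one_div]
    constructor
    · rintro ⟨hx, hd⟩
      have h1 : lurothDigit 1 x = c := by
        have := hd 1 (by simp)
        rwa [Function.update_self] at this
      have := (digit_one_eq_iff c hc x hx).1 h1
      simpa [one_div] using this
    · intro hx
      have hx' : x ∈ Set.Ioc (1/(c:ℝ)) (1/((c:ℝ)-1)) := by simpa [one_div] using hx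
      have hx01 : x ∈ Set.Ioc (0:ℝ) 1 := by
        constructor
        · exact lt_trans (by positivity) hx'.1
        · exact le_trans hx'.2 (by rw [div_le_one (by linarith)]; linarith)
      refine ⟨hx01, ?_⟩
      intro j hj
      have hj1 : j = 1 := by omega
      subst hj1
      rw [Function.update_self]
      exact (digit_one_eq_iff c hc x hx01).2 hx'
  | succ n ih =>
    intro b hb
    set a := b 1 with ha
    clear_value a
    have ha2 : 2 ≤ a := by rw [ha]; exact hb 1 (by simp)
    have ha1R : (1:ℝ) ≤ (a:ℝ) - 1 := by
      have : (2:ℝ) ≤ a := by exact_mod_cast ha2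
      linarith
    have haR : (0:ℝ) < a := by linarith
    set b' : ℕ → ℕ := fun j => b (j+1) with hb'
    clear_value b'
    have hb'2 : ∀ j ∈ Finset.Icc 1 n, 2 ≤ b' j := by
      intro j hj
      simp only [Finset.mem_Icc] at hj
      rw [hb']
      exact hb (j+1) (by simp only [Finset.mem_Icc]; omega)
    obtain ⟨u', hu'0, hu'1, hcyl'⟩ := ih b' hb'2
    -- the affine map Ta z = (z + (a-1))/(a(a-1))
    set P' := lurothP b' n with hP'
    have hP'pos : 0 < P' := lurothP_pos b' n hb'2
    clear_value P'
    have hPrel : lurothP b (n+1) = P' / ((a:ℝ) * ((a:ℝ)-1)) := by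
      rw [lurothP, hP', lurothP]
      rw [← Finset.Ico_add_one_right_eq_Icc 1 (n+1), ← Finset.Ico_add_one_right_eq_Icc 1 n]
      rw [Finset.prod_eq_prod_Ico_succ_bot (by omega) ]
      rw [← Finset.prod_Ico_add' _ 1 (n+1) 1]
      rw [← ha, mul_comm]
      rw [hb']
      beta_reduce
      ring
    have haa : (0:ℝ) < (a:ℝ) * ((a:ℝ)-1) := by nlinarith
    refine ⟨(u' + ((a:ℝ)-1)) / ((a:ℝ) * ((a:ℝ)-1)), by positivity, ?_, ?_⟩
    · rw [hPrel, ← add_div, div_le_one haa]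
      nlinarith
    intro c hc
    have hc1 : (1:ℝ) ≤ (c:ℝ) - 1 := by
      have : (2:ℝ) ≤ c := by exact_mod_cast hc
      linarith
    have hcR : (0:ℝ) < c := by linarith
    set p := u' + P' / (c:ℝ) with hp
    set q := u' + P' / ((c:ℝ)-1) with hq
    clear_value p q
    have hp0 : 0 ≤ p := by
      have : 0 < P' / (c:ℝ) := by positivity
      linarith
    have hq1 : q ≤ 1 := by
      have : P' / ((c:ℝ)-1) ≤ P' := by
        rw [div_le_iff₀ (by linarith)]
        nlinarith
      linarith
    have hcyl := hcyl' c hc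
    have hupd : ∀ j, 1 ≤ j → j ≤ n+1 →
        Function.update b' (n+1) c j = Function.update b (n+2) c (j+1) := by
      intro j hj1 hj2
      rcases eq_or_ne j (n+1) with h|h
      · subst h; simp
      · rw [Function.update_of_ne h, Function.update_of_ne (by omega), hb']
    -- endpoints
    have hept : u' + ((a:ℝ)-1) ≥ 0 := by linarith
    have hTa : ∀ z : ℝ, (z + ((a:ℝ)-1)) / ((a:ℝ)*((a:ℝ)-1)) =
        (u' + ((a:ℝ)-1)) / ((a:ℝ) * ((a:ℝ)-1)) + (z - u')/((a:ℝ)*((a:ℝ)-1)) := by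
      intro z; field_simp; ring
    have hgoalL : (u' + ((a:ℝ)-1)) / ((a:ℝ) * ((a:ℝ)-1)) + lurothP b (n+1) / (c:ℝ)
        = (p + ((a:ℝ)-1)) / ((a:ℝ)*((a:ℝ)-1)) := by
      rw [hPrel, hp]; field_simp; ring
    have hgoalR : (u' + ((a:ℝ)-1)) / ((a:ℝ) * ((a:ℝ)-1)) + lurothP b (n+1) / ((c:ℝ)-1)
        = (q + ((a:ℝ)-1)) / ((a:ℝ)*((a:ℝ)-1)) := by
      rw [hPrel, hq]; field_simp; ring
    rw [hgoalL, hgoalR]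
    ext x
    simp only [lurothCyl, Set.mem_setOf_eq, Set.mem_Ioc]
    constructor
    · rintro ⟨hx01, hd⟩
      have hd1 : lurothDigit 1 x = a := by
        have := hd 1 (by simp)
        rw [Function.update_of_ne (by omega)] at this
        rw [ha]; exact this
      have hxa : x ∈ Set.Ioc (1/(a:ℝ)) (1/((a:ℝ)-1)) :=
        (digit_one_eq_iff a ha2 x hx01).1 hd1
      have hy01 := lurothL_mem a ha2 x hxa
      have hyeq := lurothL_apply a ha2 x hxa
      have hy : lurothL x ∈ lurothCyl (Function.update b' (n+1) c) (n+1) := by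
        refine ⟨hy01, ?_⟩
        intro j hj
        simp only [Finset.mem_Icc] at hj
        rw [hupd j hj.1 hj.2, ← digit_shift j hj.1]
        exact hd (j+1) (by simp only [Finset.mem_Icc]; omega)
      rw [hcyl] at hy
      obtain ⟨hy1, hy2⟩ := hy
      rw [hyeq] at hy1 hy2
      constructor
      · rw [div_lt_iff₀ haa]; nlinarith
      · rw [le_div_iff₀ haa]; nlinarith
    · rintro ⟨hx1, hx2⟩
      rw [div_lt_iff₀ haa] at hx1
      rw [le_div_iff₀ haa] at hx2
      have hplq : p < q := by
        have : P' / (c:ℝ) < P' / ((c:ℝ)-1) := by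
          rw [div_lt_div_iff₀ hcR (by linarith)]
          nlinarith
        simp only [hp, hq]; linarith
      have hxa : x ∈ Set.Ioc (1/(a:ℝ)) (1/((a:ℝ)-1)) := by
        constructor
        · rw [div_lt_iff₀ haR]; nlinarith
        · rw [le_div_iff₀ (by linarith : (0:ℝ) < (a:ℝ)-1)]; nlinarith
      have hx01 : x ∈ Set.Ioc (0:ℝ) 1 := by
        constructor
        · exact lt_trans (by positivity) hxa.1
        · exact le_trans hxa.2 (by rw [div_le_one (by linarith)]; linarith)
      have hyeq := lurothL_apply a ha2 x hxa
      have hy : lurothL x ∈ Set.Ioc p q := by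
        rw [hyeq]
        constructor
        · nlinarith
        · nlinarith
      rw [hp, hq] at hy
      rw [← hcyl] at hy
      obtain ⟨hy01, hyd⟩ := hy
      refine ⟨hx01, ?_⟩
      intro j hj
      simp only [Finset.mem_Icc] at hj
      rcases eq_or_ne j 1 with h1|h1
      · subst h1
        rw [Function.update_of_ne (by omega), ← ha]
        exact (digit_one_eq_iff a ha2 x hx01).2 hxa
      · obtain ⟨j', rfl⟩ : ∃ j', j = j' + 1 := ⟨j - 1, by omega⟩
        rw [← hupd j' (by omega) (by omega), digit_shift j' (by omega)]
        exact hyd j' (by simp only [Finset.mem_Icc]; omega)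

lemma lurothQ_ge (b : ℕ → ℕ) (n : ℕ) (hn : 1 ≤ n)
    (hb : ∀ j ∈ Finset.Icc 1 n, 2 ≤ b j) : 2^n ≤ lurothQ b n := by
  rw [lurothQ]
  have h1 : 2^(n-1) ≤ ∏ j ∈ Finset.Ico 1 n, b j * (b j - 1) := by
    calc 2^(n-1) = ∏ _j ∈ Finset.Ico 1 n, 2 := by
          rw [Finset.prod_const, Nat.card_Ico]
      _ ≤ ∏ j ∈ Finset.Ico 1 n, b j * (b j - 1) := by
          apply Finset.prod_le_prod'
          intro j hj
          simp only [Finset.mem_Ico] at hj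
          have := hb j (by simp only [Finset.mem_Icc]; omega)
          have h2 : 1 ≤ b j - 1 := by omega
          calc 2 = 2 * 1 := rfl
            _ ≤ b j * (b j - 1) := Nat.mul_le_mul this h2
  have h2 : 2 ≤ b n := hb n (by simp only [Finset.mem_Icc]; omega)
  calc 2^n = 2^(n-1) * 2 := by
        rw [← pow_succ]; congr 1; omega
    _ ≤ (∏ j ∈ Finset.Ico 1 n, b j * (b j - 1)) * b n := Nat.mul_le_mul h1 h2

lemma one_lt_lurothR (αε : ℝ) (hαε : 0 < αε) (b : ℕ → ℕ) (n : ℕ) (hn : 1 ≤ n)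
    (hb : ∀ j ∈ Finset.Icc 1 n, 2 ≤ b j) : 1 < lurothR αε b n := by
  rw [lurothR]
  have hQ : 2 ≤ lurothQ b n := le_trans (by
    calc 2 = 2^1 := rfl
      _ ≤ 2^n := Nat.pow_le_pow_right (by norm_num) hn) (lurothQ_ge b n hn hb)
  have hQ' : (1:ℝ) < lurothQ b n := by exact_mod_cast lt_of_lt_of_le one_lt_two (by exact_mod_cast hQ)
  rw [Real.one_lt_rpow_iff_of_pos (by linarith)]
  left
  exact ⟨hQ', by positivity⟩

lemma diam_lurothK (αε : ℝ) (hαε : 0 < αε) (n : ℕ) (hn : 1 ≤ n) (b : ℕ → ℕ)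
    (hb : ∀ j ∈ Finset.Icc 1 n, 2 ≤ b j) :
    Metric.diam (lurothK αε b n)
      = lurothP b n / ((⌈lurothR αε b n⌉₊ : ℝ) - 1) := by
  obtain ⟨u, hu0, hu1, hcyl⟩ := cyl_eq_Ioc n b hb
  have hR1 : 1 < lurothR αε b n := one_lt_lurothR αε hαε b n hn hb
  set R := lurothR αε b n with hRdef
  set c0 := ⌈R⌉₊ with hc0
  have hc02 : 2 ≤ c0 := by
    have : 1 < c0 := by
      rw [hc0]
      exact Nat.lt_ceil.2 (by exact_mod_cast hR1)
    omega
  have hc01R : (1:ℝ) ≤ (c0:ℝ) - 1 := by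
    have : (2:ℝ) ≤ c0 := by exact_mod_cast hc02
    linarith
  set P := lurothP b n with hP
  have hPpos : 0 < P := lurothP_pos b n hb
  have hunion : (⋃ c : ℕ, ⋃ (_ : R ≤ (c : ℝ)),
      lurothCyl (Function.update b (n + 1) c) (n + 1))
      = Set.Ioc u (u + P / ((c0:ℝ) - 1)) := by
    ext x
    simp only [Set.mem_iUnion, Set.mem_Ioc]
    constructor
    · rintro ⟨c, hc, hx⟩
      have hc2 : 2 ≤ c := by
        have h1 : (1:ℝ) < c := lt_of_lt_of_le hR1 hc
        have : 1 < c := by exact_mod_cast h1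
        omega
      have hcc0 : c0 ≤ c := Nat.ceil_le.2 hc
      rw [hcyl c hc2] at hx
      obtain ⟨hx1, hx2⟩ := hx
      have hcR : (0:ℝ) < c := by
        have : (2:ℝ) ≤ c := by exact_mod_cast hc2
        linarith
      constructor
      · have : 0 < P / (c:ℝ) := by positivity
        linarith
      · have hmon : P / ((c:ℝ) - 1) ≤ P / ((c0:ℝ) - 1) := by
          apply div_le_div_of_nonneg_left (le_of_lt hPpos) (by linarith)
          have : (c0:ℝ) ≤ c := by exact_mod_cast hcc0
          linarith
        linarith
    · rintro ⟨hx1, hx2⟩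
      set t := x - u with ht
      have ht0 : 0 < t := by simp only [ht]; linarith
      have htle : t ≤ P / ((c0:ℝ) - 1) := by simp only [ht]; linarith
      have hPt : ((c0:ℝ) - 1) ≤ P / t := by
        rw [le_div_iff₀ ht0]
        rw [le_div_iff₀ (by linarith : (0:ℝ) < (c0:ℝ)-1)] at htle
        linarith
      set c := ⌊P / t⌋₊ + 1 with hcdef
      have hcc0 : c0 ≤ c := by
        have h1 : (((c0 - 1 : ℕ)):ℝ) ≤ P / t := by
          push_cast [Nat.cast_sub (by omega : 1 ≤ c0)]
          exact hPt
        have := Nat.le_floor h1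
        omega
      have hc2 : 2 ≤ c := le_trans hc02 hcc0
      have hcR : R ≤ (c:ℝ) := by
        calc R ≤ (c0:ℝ) := Nat.le_ceil R
          _ ≤ (c:ℝ) := by exact_mod_cast hcc0
      refine ⟨c, hcR, ?_⟩
      rw [hcyl c hc2]
      have hcpos : (0:ℝ) < c := by
        have : (2:ℝ) ≤ c := by exact_mod_cast hc2
        linarith
      constructor
      · have hlt : P / t < (c:ℝ) := by
          have := Nat.lt_floor_add_one (P / t)
          push_cast [hcdef]
          push_cast at this
          linarith
        rw [div_lt_iff₀ ht0] at hlt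
        have : P / (c:ℝ) < t := by
          rw [div_lt_iff₀ hcpos]
          linarith [mul_comm t (c:ℝ)]
        simp only [ht] at this
        linarith
      · have hfle : ((c:ℝ) - 1) ≤ P / t := by
          have h1 : ((⌊P / t⌋₊ : ℝ)) ≤ P / t := Nat.floor_le (by positivity)
          push_cast [hcdef]
          linarith
        rw [le_div_iff₀ ht0] at hfle
        have : t ≤ P / ((c:ℝ) - 1) := by
          rw [le_div_iff₀ (by
            have : (2:ℝ) ≤ c := by exact_mod_cast hc2
            linarith : (0:ℝ) < (c:ℝ)-1)]
          linarith [mul_comm t ((c:ℝ) - 1)]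
        simp only [ht] at this
        linarith
  rw [lurothK, ← hRdef, hunion]
  have hne : u < u + P / ((c0:ℝ) - 1) := by
    have : 0 < P / ((c0:ℝ) - 1) := by positivity
    linarith
  rw [closure_Ioc (ne_of_lt hne), Real.diam_Icc (le_of_lt hne)]
  ring

def lurothD (b : ℕ → ℕ) (n : ℕ) : ℕ := ∏ j ∈ Finset.Icc 1 n, (b j * (b j - 1))

lemma lurothD_ge (b : ℕ → ℕ) (n : ℕ) (hb : ∀ j ∈ Finset.Icc 1 n, 2 ≤ b j) :
    2^n ≤ lurothD b n := by
  rw [lurothD]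
  calc 2^n = ∏ _j ∈ Finset.Icc 1 n, 2 := by
        rw [Finset.prod_const, Nat.card_Icc, Nat.add_sub_cancel]
    _ ≤ ∏ j ∈ Finset.Icc 1 n, (b j * (b j - 1)) := by
        apply Finset.prod_le_prod'
        intro j hj
        have := hb j hj
        have h2 : 1 ≤ b j - 1 := by omega
        calc 2 = 2 * 1 := rfl
          _ ≤ b j * (b j - 1) := Nat.mul_le_mul this h2

lemma lurothD_pos (b : ℕ → ℕ) (n : ℕ) (hb : ∀ j ∈ Finset.Icc 1 n, 2 ≤ b j) :
    0 < lurothD b n := lt_of_lt_of_le (pow_pos (by norm_num) n) (lurothD_ge b n hb)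

lemma lurothQ_le_D (b : ℕ → ℕ) (n : ℕ) (hn : 1 ≤ n)
    (hb : ∀ j ∈ Finset.Icc 1 n, 2 ≤ b j) : lurothQ b n ≤ lurothD b n := by
  rw [lurothQ, lurothD, ← Finset.Ico_add_one_right_eq_Icc 1 n,
    Finset.prod_Ico_succ_top (by omega : 1 ≤ n)]
  apply Nat.mul_le_mul_left
  have := hb n (by simp only [Finset.mem_Icc]; omega)
  calc b n = b n * 1 := (mul_one _).symm
    _ ≤ b n * (b n - 1) := Nat.mul_le_mul_left _ (by omega)

lemma lurothP_eq_inv_D (b : ℕ → ℕ) (n : ℕ) (hb : ∀ j ∈ Finset.Icc 1 n, 2 ≤ b j) :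
    lurothP b n = ((lurothD b n : ℝ))⁻¹ := by
  rw [lurothP, lurothD, Nat.cast_prod, ← Finset.prod_inv_distrib]
  apply Finset.prod_congr rfl
  intro j hj
  have h2 := hb j hj
  rw [Nat.cast_mul, Nat.cast_sub (by omega : 1 ≤ b j)]
  push_cast
  rw [one_div]

lemma update_Q (b : ℕ → ℕ) (n : ℕ) (c : ℕ) :
    lurothQ (Function.update b (n+1) c) (n+1) = lurothD b n * c := by
  rw [lurothQ, lurothD, Function.update_self, ← Finset.Ico_add_one_right_eq_Icc 1 n]
  congr 1
  apply Finset.prod_congr rfl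
  intro j hj
  simp only [Finset.mem_Ico] at hj
  rw [Function.update_of_ne (by omega)]

lemma update_P (b : ℕ → ℕ) (n : ℕ) (c : ℕ) :
    lurothP (Function.update b (n+1) c) (n+1)
      = lurothP b n * (1 / ((c:ℝ) * ((c:ℝ) - 1))) := by
  rw [lurothP, lurothP, ← Finset.Ico_add_one_right_eq_Icc 1 (n+1),
    Finset.prod_Ico_succ_top (by omega : 1 ≤ n+1), Function.update_self,
    ← Finset.Ico_add_one_right_eq_Icc 1 n]
  congr 1
  apply Finset.prod_congr rfl
  intro j hj
  simp only [Finset.mem_Ico] at hj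
  rw [Function.update_of_ne (by omega)]

lemma update_digits (b : ℕ → ℕ) (n : ℕ) (c : ℕ) (hc : 2 ≤ c)
    (hb : ∀ j ∈ Finset.Icc 1 n, 2 ≤ b j) :
    ∀ j ∈ Finset.Icc 1 (n+1), 2 ≤ Function.update b (n+1) c j := by
  intro j hj
  simp only [Finset.mem_Icc] at hj
  rcases eq_or_ne j (n+1) with h|h
  · subst h; rw [Function.update_self]; exact hc
  · rw [Function.update_of_ne h]
    exact hb j (by simp only [Finset.mem_Icc]; omega)

set_option maxHeartbeats 1000000 in
/-- For α, ε > 0 and 0 < δ₁ < 1/(2 + 1/(α+ε)), setting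
s = (α+ε)/(2(α+ε)+1) + δ₁, there is N such that for all n ≥ N and all words b of
length n with digits ≥ 2, ∑_{c ≥ R_n(b)} |K_{n+1}(b c)|^s ≤ |K_n(b)|^s. -/
theorem luroth_K_sum_rpow_le (α ε δ₁ : ℝ) (hα : 0 < α) (hε : 0 < ε)
    (hδ₁ : 0 < δ₁) (hδ₁' : δ₁ < 1 / (2 + 1 / (α + ε))) (s : ℝ)
    (hs : s = (α + ε) / (2 * (α + ε) + 1) + δ₁) :
    ∃ N : ℕ, ∀ n, N ≤ n → ∀ b : ℕ → ℕ, (∀ j ∈ Finset.Icc 1 n, 2 ≤ b j) →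
      ∑' c : {c : ℕ // lurothR (α + ε) b n ≤ (c : ℝ)},
          Metric.diam (lurothK (α + ε) (Function.update b (n + 1) (c : ℕ)) (n + 1)) ^ s
        ≤ Metric.diam (lurothK (α + ε) b n) ^ s := by
  have hαε : 0 < α + ε := by linarith
  set αε := α + ε with hαεdef
  clear_value αε
  have hs0 : 0 < s := by
    rw [hs]
    have : 0 < αε / (2 * αε + 1) := div_pos hαε (by linarith)
    linarith
  set t := s * (2 + 1/αε) with htdef
  clear_value t
  have h2a : (0:ℝ) < 2*αε + 1 := by linarith
  have ht1 : 1 < t := by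
    have hts : t * αε = αε + δ₁ * (2*αε+1) := by
      rw [htdef, hs]
      field_simp
    have h3 : 1 * αε < t * αε := by
      rw [hts, one_mul]
      have := mul_pos hδ₁ (by linarith : (0:ℝ) < 2*αε+1)
      linarith
    exact lt_of_mul_lt_mul_right h3 (le_of_lt hαε)
  set w := (t-1)/2 with hwdef
  set e := (t+1)/2 with hedef
  clear_value w e
  have hw0 : 0 < w := by rw [hwdef]; linarith
  have he1 : 1 < e := by rw [hedef]; linarith
  have hwe : -w + -e = -t := by rw [hwdef, hedef]; ring
  have hZsum : Summable (fun c : ℕ => (c:ℝ) ^ (-e)) := Real.summable_nat_rpow.2 (by linarith)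
  set Z := ∑' c : ℕ, (c:ℝ) ^ (-e) with hZdef
  clear_value Z
  have hZ0 : 0 ≤ Z := by
    rw [hZdef]
    exact tsum_nonneg (fun c => Real.rpow_nonneg (Nat.cast_nonneg c) _)
  set θ := (2:ℝ) ^ (w/αε) with hθdef
  clear_value θ
  have hθ1 : 1 < θ := by
    rw [hθdef, Real.one_lt_rpow_iff_of_pos (by norm_num)]
    left; exact ⟨one_lt_two, by positivity⟩
  obtain ⟨N₀, hN₀⟩ := pow_unbounded_of_one_lt ((4:ℝ)^s * Z) hθ1
  refine ⟨max N₀ (max 1 ⌈αε⌉₊), ?_⟩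
  intro n hn b hb
  have hn1 : 1 ≤ n := le_trans (le_max_left 1 _) (le_trans (le_max_right N₀ _) hn)
  have hnN₀ : N₀ ≤ n := le_trans (le_max_left _ _) hn
  have hnαε : αε ≤ (n:ℝ) := by
    have h1 : ⌈αε⌉₊ ≤ n := le_trans (le_max_right 1 _) (le_trans (le_max_right N₀ _) hn)
    calc αε ≤ (⌈αε⌉₊:ℝ) := Nat.le_ceil αε
      _ ≤ n := by exact_mod_cast h1
  set R := lurothR αε b n with hRdef
  clear_value R
  have hR1 : 1 < R := by
    rw [hRdef]; exact one_lt_lurothR αε hαε b n hn1 hb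
  have hR0 : 0 < R := lt_trans zero_lt_one hR1
  set P := lurothP b n with hP
  clear_value P
  have hPpos : 0 < P := by rw [hP]; exact lurothP_pos b n hb
  set D := lurothD b n with hD
  clear_value D
  have hDpos : 0 < lurothD b n := lurothD_pos b n hb
  have hDR : (0:ℝ) < D := by rw [hD]; exact_mod_cast hDpos
  have hQpos : (0:ℝ) < (lurothQ b n : ℝ) := by
    have h2 : 2 ≤ lurothQ b n := le_trans (by
      calc 2 = 2^1 := rfl
        _ ≤ 2^n := Nat.pow_le_pow_right (by norm_num) hn1) (lurothQ_ge b n hn1 hb)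
    have : (2:ℝ) ≤ (lurothQ b n : ℝ) := by exact_mod_cast h2
    linarith
  -- R^w ≥ θ^n
  have hθn : θ^n ≤ R^w := by
    have step1 : ((2:ℝ) ^ (n:ℝ)) ^ (1/αε) ≤ R := by
      rw [hRdef, lurothR]
      apply Real.rpow_le_rpow (by positivity) ?_ (by positivity)
      rw [Real.rpow_natCast]
      calc (2:ℝ)^n = ((2^n : ℕ) : ℝ) := by push_cast; ring
        _ ≤ _ := by exact_mod_cast lurothQ_ge b n hn1 hb
    calc θ^n = (2:ℝ) ^ ((w/αε) * n) := by
          rw [hθdef, ← Real.rpow_natCast ((2:ℝ)^(w/αε)) n, ← Real.rpow_mul (by norm_num)]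
      _ = (((2:ℝ) ^ (n:ℝ)) ^ (1/αε)) ^ w := by
          rw [← Real.rpow_mul (by norm_num), ← Real.rpow_mul (by norm_num)]
          congr 1; ring
      _ ≤ R ^ w := Real.rpow_le_rpow (by positivity) step1 (le_of_lt hw0)
  -- RHS diam
  have hdiam : Metric.diam (lurothK αε b n) = P / ((⌈R⌉₊:ℝ) - 1) := by
    rw [hRdef, hP]; exact diam_lurothK αε hαε n hn1 b hb
  set c0 := ⌈R⌉₊ with hc0
  clear_value c0
  have hc02 : 2 ≤ c0 := by
    have h1 : 1 < c0 := by
      rw [hc0]; exact Nat.lt_ceil.2 (by exact_mod_cast hR1)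
    omega
  have hc01R : (1:ℝ) ≤ (c0:ℝ) - 1 := by
    have : (2:ℝ) ≤ c0 := by exact_mod_cast hc02
    linarith
  have hc0leR : (c0:ℝ) - 1 ≤ R := by
    have := Nat.ceil_lt_add_one (le_of_lt hR0)
    rw [← hc0] at this
    linarith
  -- nonnegativity facts
  have h4s : (0:ℝ) ≤ (4:ℝ)^s := Real.rpow_nonneg (by norm_num) s
  have hPs : (0:ℝ) ≤ P^s := Real.rpow_nonneg (le_of_lt hPpos) s
  have hDs : (0:ℝ) ≤ (D:ℝ)^(-(s/αε)) := Real.rpow_nonneg (le_of_lt hDR) _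
  have hRw : (0:ℝ) ≤ R^(-w) := Real.rpow_nonneg (le_of_lt hR0) _
  -- the majorant
  set C0 := (4:ℝ)^s * P^s * (D:ℝ)^(-(s/αε)) * R^(-w) with hC0
  clear_value C0
  have hC00 : 0 ≤ C0 := by
    rw [hC0]
    exact mul_nonneg (mul_nonneg (mul_nonneg h4s hPs) hDs) hRw
  set g : ℕ → ℝ := fun c => C0 * (c:ℝ)^(-e) with hg
  clear_value g
  have hgsum : Summable g := by
    rw [hg]; exact hZsum.mul_left C0
  have hg0 : ∀ c : ℕ, 0 ≤ g c := by
    intro c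
    rw [hg]
    exact mul_nonneg hC00 (Real.rpow_nonneg (Nat.cast_nonneg c) _)
  -- pointwise bound
  have hf_le : ∀ c : {c : ℕ // R ≤ (c : ℝ)},
      Metric.diam (lurothK αε (Function.update b (n + 1) (c : ℕ)) (n + 1)) ^ s ≤ g (c : ℕ) := by
    rintro ⟨c, hc⟩
    simp only
    have hc2 : 2 ≤ c := by
      have h1 : (1:ℝ) < c := lt_of_lt_of_le hR1 hc
      have : 1 < c := by exact_mod_cast h1
      omega
    have hcPos : (0:ℝ) < c := by
      have : (2:ℝ) ≤ c := by exact_mod_cast hc2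
      linarith
    have hc1R : (1:ℝ) ≤ (c:ℝ) - 1 := by
      have : (2:ℝ) ≤ c := by exact_mod_cast hc2
      linarith
    have hb' := update_digits b n c hc2 hb
    set b' := Function.update b (n+1) c with hb'def
    clear_value b'
    set R' := lurothR αε b' (n+1) with hR'def
    clear_value R'
    set c1 := ⌈R'⌉₊ with hc1def
    clear_value c1
    have hdiam' : Metric.diam (lurothK αε b' (n+1))
        = lurothP b' (n+1) / ((c1:ℝ) - 1) := by
      have h := diam_lurothK αε hαε (n+1) (by omega) b' hb'
      rw [← hR'def, ← hc1def] at h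
      exact h
    have hPb' : lurothP b' (n+1) = P * (1 / ((c:ℝ) * ((c:ℝ) - 1))) := by
      rw [hb'def, update_P, hP]
    have hR'eq : R' = ((D:ℝ) * (c:ℝ)) ^ (1/αε) := by
      rw [hR'def, lurothR, hb'def, update_Q, hD]
      push_cast
      ring_nf
    have hR'2 : 2 ≤ R' := by
      have hDc : (2:ℝ)^αε ≤ (D:ℝ) * (c:ℝ) := by
        calc (2:ℝ)^αε ≤ (2:ℝ)^(n:ℝ) := Real.rpow_le_rpow_of_exponent_le one_le_two hnαε
          _ = ((2^n : ℕ) : ℝ) := by rw [Real.rpow_natCast]; push_cast; ring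
          _ ≤ (D:ℝ) := by rw [hD]; exact_mod_cast lurothD_ge b n hb
          _ ≤ (D:ℝ) * (c:ℝ) :=
              le_mul_of_one_le_right (le_of_lt hDR) (by linarith : (1:ℝ) ≤ (c:ℝ))
      calc (2:ℝ) = ((2:ℝ)^αε)^(1/αε) := by
            rw [← Real.rpow_mul (by norm_num), mul_one_div_cancel (ne_of_gt hαε), Real.rpow_one]
        _ ≤ ((D:ℝ) * (c:ℝ)) ^ (1/αε) := Real.rpow_le_rpow (by positivity) hDc (by positivity)
        _ = R' := hR'eq.symm
    have hR'0 : (0:ℝ) < R' := by linarith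
    have hc1ge : R'/2 ≤ (c1:ℝ) - 1 := by
      have := Nat.le_ceil R'
      rw [← hc1def] at this
      linarith
    have hcc : (0:ℝ) < (c:ℝ) * ((c:ℝ) - 1) := mul_pos hcPos (by linarith)
    have hsplit : R' = (D:ℝ)^(1/αε) * (c:ℝ)^(1/αε) := by
      rw [hR'eq, Real.mul_rpow (le_of_lt hDR) (le_of_lt hcPos)]
    set dR := (D:ℝ)^(1/αε) with hdR
    set cR := (c:ℝ)^(1/αε) with hcR
    clear_value dR cR
    have hdR0 : 0 < dR := by rw [hdR]; exact Real.rpow_pos_of_pos hDR _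
    have hcR0 : 0 < cR := by rw [hcR]; exact Real.rpow_pos_of_pos hcPos _
    set y := 4 * P * (D:ℝ)^(-(1/αε)) * (c:ℝ)^(-(2+1/αε)) with hy
    clear_value y
    have hyeq : y = (4 * P) / (dR * ((c:ℝ)^2 * cR)) := by
      rw [hy, Real.rpow_neg (le_of_lt hDR), Real.rpow_neg (le_of_lt hcPos),
        Real.rpow_add hcPos, ← hdR]
      rw [show ((c:ℝ)^(2:ℝ)) = (c:ℝ)^(2:ℕ) by rw [← Real.rpow_natCast]; norm_num]
      rw [← hcR]
      field_simp
    have hXy : Metric.diam (lurothK αε b' (n+1)) ≤ y := by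
      rw [hdiam', hPb']
      calc P * (1 / ((c:ℝ) * ((c:ℝ) - 1))) / ((c1:ℝ) - 1)
          ≤ P * (1 / ((c:ℝ) * ((c:ℝ) - 1))) / (R'/2) := by
            apply div_le_div_of_nonneg_left ?_ (by linarith) hc1ge
            exact le_of_lt (mul_pos hPpos (one_div_pos.2 hcc))
        _ ≤ y := by
            rw [hyeq, hsplit]
            have hdc0 : 0 < dR * cR := mul_pos hdR0 hcR0
            have hden2 : (0:ℝ) < dR * ((c:ℝ)^2 * cR) :=
              mul_pos hdR0 (mul_pos (pow_pos hcPos 2) hcR0)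
            rw [div_le_div_iff₀ (by linarith : (0:ℝ) < dR * cR / 2) hden2]
            have h2c : (2:ℝ) ≤ c := by exact_mod_cast hc2
            have hkey : (c:ℝ)^2 ≤ 2 * ((c:ℝ) * ((c:ℝ)-1)) := by
              have hx : (0:ℝ) ≤ (c:ℝ) * ((c:ℝ) - 2) :=
                mul_nonneg (le_of_lt hcPos) (by linarith)
              have hx2 : (c:ℝ) * ((c:ℝ) - 2) = (c:ℝ)^2 - 2*(c:ℝ) := by ring
              have hx3 : (c:ℝ) * ((c:ℝ) - 1) = (c:ℝ)^2 - (c:ℝ) := by ring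
              rw [hx2] at hx
              rw [hx3]
              linarith
            have hPdc : (0:ℝ) ≤ P / ((c:ℝ) * ((c:ℝ) - 1)) * (dR * cR) :=
              le_of_lt (mul_pos (div_pos hPpos hcc) hdc0)
            have hmain : P * (1 / ((c:ℝ) * ((c:ℝ) - 1))) * (dR * ((c:ℝ)^2 * cR))
                = (P / ((c:ℝ) * ((c:ℝ) - 1)) * (dR * cR)) * (c:ℝ)^2 := by ring
            have hrhs : 4 * P * (dR * cR / 2)
                = (P * (dR * cR)) * 2 := by ring
            rw [hmain, hrhs]
            have hstep : (P / ((c:ℝ) * ((c:ℝ) - 1)) * (dR * cR)) * (c:ℝ)^2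
                ≤ (P / ((c:ℝ) * ((c:ℝ) - 1)) * (dR * cR)) * (2 * ((c:ℝ) * ((c:ℝ)-1))) :=
              mul_le_mul_of_nonneg_left hkey hPdc
            calc (P / ((c:ℝ) * ((c:ℝ) - 1)) * (dR * cR)) * (c:ℝ)^2
                ≤ (P / ((c:ℝ) * ((c:ℝ) - 1)) * (dR * cR)) * (2 * ((c:ℝ) * ((c:ℝ)-1))) := hstep
              _ = (P * (dR * cR)) * 2 := by
                  field_simp
    have hfy : Metric.diam (lurothK αε b' (n+1)) ^ s ≤ y ^ s :=
      Real.rpow_le_rpow Metric.diam_nonneg hXy (le_of_lt hs0)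
    have hys : y ^ s = (4:ℝ)^s * P^s * (D:ℝ)^(-(s/αε)) * (c:ℝ)^(-t) := by
      rw [hy]
      rw [Real.mul_rpow
            (mul_nonneg (mul_nonneg (by norm_num) (le_of_lt hPpos))
              (Real.rpow_nonneg (le_of_lt hDR) _))
            (Real.rpow_nonneg (le_of_lt hcPos) _),
        Real.mul_rpow (mul_nonneg (by norm_num) (le_of_lt hPpos))
            (Real.rpow_nonneg (le_of_lt hDR) _),
        Real.mul_rpow (by norm_num) (le_of_lt hPpos)]
      rw [← Real.rpow_mul (le_of_lt hDR), ← Real.rpow_mul (le_of_lt hcPos)]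
      rw [show -(1/αε) * s = -(s/αε) by ring, show -(2+1/αε) * s = -t by rw [htdef]; ring]
    have hct : (c:ℝ)^(-t) ≤ R^(-w) * (c:ℝ)^(-e) := by
      rw [← hwe, Real.rpow_add hcPos]
      apply mul_le_mul_of_nonneg_right ?_ (Real.rpow_nonneg (le_of_lt hcPos) _)
      rw [Real.rpow_neg (le_of_lt hcPos), Real.rpow_neg (le_of_lt hR0)]
      apply inv_anti₀ (Real.rpow_pos_of_pos hR0 _)
      exact Real.rpow_le_rpow (le_of_lt hR0) hc (le_of_lt hw0)
    calc Metric.diam (lurothK αε b' (n+1)) ^ s ≤ y ^ s := hfy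
      _ = (4:ℝ)^s * P^s * (D:ℝ)^(-(s/αε)) * (c:ℝ)^(-t) := hys
      _ ≤ (4:ℝ)^s * P^s * (D:ℝ)^(-(s/αε)) * (R^(-w) * (c:ℝ)^(-e)) := by
          apply mul_le_mul_of_nonneg_left hct
          exact mul_nonneg (mul_nonneg h4s hPs) hDs
      _ = g c := by
          rw [hg, hC0]
          ring
  have hf0 : ∀ c : {c : ℕ // R ≤ (c : ℝ)},
      0 ≤ Metric.diam (lurothK αε (Function.update b (n + 1) (c : ℕ)) (n + 1)) ^ s :=
    fun c => Real.rpow_nonneg Metric.diam_nonneg s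
  have hfsum : Summable (fun c : {c : ℕ // R ≤ (c : ℝ)} =>
      Metric.diam (lurothK αε (Function.update b (n + 1) (c : ℕ)) (n + 1)) ^ s) := by
    apply Summable.of_nonneg_of_le hf0 hf_le
    exact hgsum.comp_injective Subtype.val_injective
  have hsum_le : ∑' c : {c : ℕ // R ≤ (c : ℝ)},
      Metric.diam (lurothK αε (Function.update b (n + 1) (c : ℕ)) (n + 1)) ^ s
        ≤ C0 * Z := by
    calc ∑' c : {c : ℕ // R ≤ (c : ℝ)},
        Metric.diam (lurothK αε (Function.update b (n + 1) (c : ℕ)) (n + 1)) ^ s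
        ≤ ∑' c : ℕ, g c :=
          hfsum.tsum_le_tsum_of_inj Subtype.val Subtype.val_injective
            (fun c _ => hg0 c) hf_le hgsum
      _ = C0 * Z := by
          simp only [hg]
          rw [tsum_mul_left, hZdef]
  -- final comparison
  have hRw0 : (0:ℝ) < R^w := Real.rpow_pos_of_pos hR0 _
  have h4Z : (4:ℝ)^s * Z ≤ R^w :=
    le_trans (le_of_lt hN₀) (le_trans (pow_le_pow_right₀ (le_of_lt hθ1) hnN₀) hθn)
  have hQD : (lurothQ b n : ℝ) ≤ (D:ℝ) := by
    rw [hD]; exact_mod_cast lurothQ_le_D b n hn1 hb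
  have hDQ : (D:ℝ)^(-(s/αε)) ≤ (lurothQ b n : ℝ)^(-(s/αε)) := by
    rw [Real.rpow_neg (le_of_lt hDR), Real.rpow_neg (le_of_lt hQpos)]
    apply inv_anti₀ (Real.rpow_pos_of_pos hQpos _)
    exact Real.rpow_le_rpow (le_of_lt hQpos) hQD (by positivity)
  have hQR : (lurothQ b n : ℝ)^(-(s/αε)) = R^(-s) := by
    rw [hRdef, lurothR, ← Real.rpow_mul (le_of_lt hQpos)]
    congr 1
    ring
  have hfinal : C0 * Z ≤ (P / ((c0:ℝ) - 1))^s := by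
    have step1 : C0 * Z ≤ P^s * R^(-s) := by
      rw [hC0]
      have expand : (4:ℝ)^s * P^s * (D:ℝ)^(-(s/αε)) * R^(-w) * Z
          = P^s * ((D:ℝ)^(-(s/αε)) * ((4:ℝ)^s * R^(-w) * Z)) := by ring
      rw [expand]
      apply mul_le_mul_of_nonneg_left ?_ hPs
      have h1 : (4:ℝ)^s * R^(-w) * Z ≤ 1 := by
        rw [Real.rpow_neg (le_of_lt hR0)]
        rw [show (4:ℝ)^s * (R^w)⁻¹ * Z = ((4:ℝ)^s * Z) / R^w by ring]
        rw [div_le_one hRw0]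
        exact h4Z
      have h2 : (D:ℝ)^(-(s/αε)) ≤ R^(-s) := le_of_le_of_eq hDQ hQR
      calc (D:ℝ)^(-(s/αε)) * ((4:ℝ)^s * R^(-w) * Z)
          ≤ R^(-s) * 1 := by
            apply mul_le_mul h2 h1 ?_ (Real.rpow_nonneg (le_of_lt hR0) _)
            exact mul_nonneg (mul_nonneg h4s hRw) hZ0
        _ = R^(-s) := mul_one _
    have step2 : P^s * R^(-s) = (P/R)^s := by
      rw [Real.div_rpow (le_of_lt hPpos) (le_of_lt hR0), Real.rpow_neg (le_of_lt hR0),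
        div_eq_mul_inv]
    have step3 : (P/R)^s ≤ (P / ((c0:ℝ) - 1))^s := by
      apply Real.rpow_le_rpow (le_of_lt (div_pos hPpos hR0)) ?_ (le_of_lt hs0)
      apply div_le_div_of_nonneg_left (le_of_lt hPpos) (by linarith) hc0leR
    calc C0 * Z ≤ P^s * R^(-s) := step1
      _ = (P/R)^s := step2
      _ ≤ (P / ((c0:ℝ) - 1))^s := step3
  rw [hdiam]
  exact le_trans hsum_le hfinal
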